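/- Let p be a prime with p ≡ 1 (mod 4), v ∈ ℚ_p a p-adic unit that is not a square in ℚ_p, A = diag(1, -v, p), and SO(3)_p = {L ∈ M₃(ℚ_p) : LᵀAL = A, det L = 1}. Let e₁, e₂, e₃ be the standard basis vectors of ℚ_p³. Then every M ∈ SO(3)_p can be written as M = X·Z·Y with X, Z, Y ∈ SO(3)_p satisfying X e₁ = e₁, Z e₃ = e₃, Y e₂ = e₂; and likewise every M ∈ SO(3)_p can be written as M = Y'·Z'·X' with Y', Z', X' ∈ SO(3)_p satisfying Y' e₂ = e₂, Z' e₃ = e₃, X' e₁ = e₁. -/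

import Mathlib

open Matrix

section AuxCardano

variable {p : ℕ} [Fact p.Prime]

/-- Any element of `ℚ_[p]` close to 1 is a square (p odd). -/
private lemma aux_isSquare_of_near_one (hp2 : p ≠ 2) {x : ℚ_[p]} (h : ‖x - 1‖ < 1) :
    IsSquare x := by
  have hx1 : ‖x‖ = 1 := by
    have : ‖x - 1 + 1‖ = 1 := by
      rw [Padic.add_eq_max_of_ne (by simp; linarith [h] : ‖x - 1‖ ≠ ‖(1:ℚ_[p])‖)]
      simp [max_eq_right h.le]
    simpa using this
  have hxle : ‖x‖ ≤ 1 := hx1.le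
  set X : ℤ_[p] := ⟨x, hxle⟩ with hX
  have h2 : ‖(2 : ℤ_[p])‖ = 1 := by
    have := PadicInt.norm_int_lt_one_iff_dvd (p := p) 2
    have h2le : ‖(2 : ℤ_[p])‖ ≤ 1 := PadicInt.norm_le_one _
    rcases lt_or_eq_of_le h2le with hlt | heq
    · exfalso
      have hd : (p : ℤ) ∣ 2 := by
        rw [← this]; exact_mod_cast hlt
      have : p ∣ 2 := by exact_mod_cast hd
      exact hp2 ((Nat.prime_dvd_prime_iff_eq Fact.out Nat.prime_two).mp this)
    · exact heq
  have key := hensels_lemma (p := p) (F := Polynomial.X ^ 2 - Polynomial.C X) (a := 1) ?_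
  · obtain ⟨z, hz, -⟩ := key
    simp only [Polynomial.eval_sub, Polynomial.eval_pow, Polynomial.eval_X,
      Polynomial.eval_C, sub_eq_zero, map_sub, map_pow, Polynomial.aeval_X, Polynomial.aeval_C,
      Algebra.algebraMap_self, RingHom.id_apply] at hz
    refine ⟨(z : ℚ_[p]), ?_⟩
    have : ((z ^ 2 : ℤ_[p]) : ℚ_[p]) = x := by rw [hz]
    push_cast at this
    rw [← this]; ring
  · simp only [Polynomial.derivative_sub, Polynomial.derivative_pow, Polynomial.derivative_X,
      Polynomial.derivative_C, Polynomial.eval_sub, Polynomial.eval_pow, Polynomial.eval_X,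
      Polynomial.eval_C, Polynomial.eval_mul, Polynomial.eval_one, map_sub, map_pow, map_mul,
      Polynomial.aeval_X, Polynomial.aeval_C, Algebra.algebraMap_self, RingHom.id_apply, map_one]
    have : ‖(1 : ℤ_[p]) ^ 2 - X‖ < 1 := by
      rw [show (1 : ℤ_[p]) ^ 2 - X = -(X - 1) by ring, norm_neg]
      have : ‖X - 1‖ = ‖x - 1‖ := rfl
      rw [this]; exact h
    calc ‖(1:ℤ_[p])^2 - X‖ < 1 := this
    _ ≤ _ := by simp [h2]

/-- If `x` is a unit and `x² - u` is small, then `u` is a square. -/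
private lemma aux_isSquare_of_unit_close (hp2 : p ≠ 2) {x u : ℚ_[p]} (hx : ‖x‖ = 1)
    (h : ‖x ^ 2 - u‖ < 1) : IsSquare u := by
  have hx0 : x ≠ 0 := by intro h0; rw [h0] at hx; simp at hx
  have hx2 : ‖x ^ 2‖ = 1 := by rw [norm_pow, hx, one_pow]
  have : ‖u / x ^ 2 - 1‖ < 1 := by
    rw [show u / x ^ 2 - 1 = -((x ^ 2 - u) / x ^ 2) by field_simp; ring, norm_neg, norm_div, hx2, div_one]
    exact h
  obtain ⟨s, hs⟩ := aux_isSquare_of_near_one hp2 this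
  exact ⟨x * s, by field_simp at hs ⊢; rw [hs]⟩

/-- For `p ≡ 1 mod 4`, `-1` is a square in `ℚ_[p]`. -/
private lemma aux_neg_one_isSquare (hp : p % 4 = 1) : IsSquare (-1 : ℚ_[p]) := by
  have hp2 : p ≠ 2 := by intro h; rw [h] at hp; norm_num at hp
  have : NeZero p := ⟨(Fact.out : p.Prime).ne_zero⟩
  obtain ⟨y, hy⟩ : IsSquare (-1 : ZMod p) := by
    rw [ZMod.exists_sq_eq_neg_one_iff]; omega
  set k : ℕ := y.val with hk
  have hyk : (k : ZMod p) = y := ZMod.natCast_rightInverse y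
  have hdvd : p ∣ k * k + 1 := by
    have : ((k * k + 1 : ℕ) : ZMod p) = 0 := by push_cast [hyk]; rw [← hy]; ring
    exact (ZMod.natCast_eq_zero_iff _ _).mp this
  have hsmall : ‖((k : ℚ_[p]) ^ 2 - (-1))‖ < 1 := by
    have : ((k : ℚ_[p]) ^ 2 - (-1)) = ((k * k + 1 : ℕ) : ℚ_[p]) := by push_cast; ring
    rw [this]
    have := (Padic.norm_intCast_lt_one_iff (p := p) (k := (k : ℤ) * k + 1)).mpr (by exact_mod_cast hdvd)
    convert this using 2
    norm_cast
  have hknorm : ‖(k : ℚ_[p])‖ = 1 := by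
    have hle : ‖(k : ℚ_[p])‖ ≤ 1 := by
      have := Padic.norm_int_le_one (p := p) k
      push_cast at this; exact this
    rcases lt_or_eq_of_le hle with hlt | heq
    · exfalso
      have h1 : ‖(k : ℚ_[p]) ^ 2‖ < 1 := by
        rw [norm_pow]
        nlinarith [norm_nonneg ((k:ℕ) : ℚ_[p])]
      have : ‖(k : ℚ_[p]) ^ 2 - (-1)‖ = 1 := by
        rw [sub_neg_eq_add, Padic.add_eq_max_of_ne (by rw [norm_one]; exact ne_of_lt h1),
          norm_one, max_eq_right h1.le]
      linarith [hsmall, this]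
    · exact heq
  exact aux_isSquare_of_unit_close hp2 hknorm hsmall

private lemma aux_hp1 : (1 : ℝ) < p := by exact_mod_cast (Fact.out : p.Prime).one_lt

/-- parity: `‖x²‖ ≠ ‖p·y²‖` for nonzero x, y. -/
private lemma aux_norm_parity {x y : ℚ_[p]} (hx : x ≠ 0) (hy : y ≠ 0) :
    ‖x ^ 2‖ ≠ ‖(p : ℚ_[p]) * y ^ 2‖ := by
  have hp0 : ((p : ℚ_[p])) ≠ 0 := by
    exact_mod_cast (Nat.cast_ne_zero (R := ℚ_[p])).mpr (Fact.out : p.Prime).ne_zero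
  have hx2 : (x ^ 2) ≠ 0 := pow_ne_zero _ hx
  have hy2 : ((p : ℚ_[p]) * y ^ 2) ≠ 0 := mul_ne_zero hp0 (pow_ne_zero _ hy)
  rw [Padic.norm_eq_zpow_neg_valuation hx2, Padic.norm_eq_zpow_neg_valuation hy2]
  intro hEq
  have hinj := zpow_right_injective₀ (by exact_mod_cast (Fact.out : p.Prime).pos : (0:ℝ) < p)
    (ne_of_gt aux_hp1) hEq
  have h1 : (x ^ 2).valuation = 2 * x.valuation := by
    rw [pow_two, Padic.valuation_mul hx hx]; ring
  have h2 : ((p : ℚ_[p]) * y ^ 2).valuation = 1 + 2 * y.valuation := by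
    rw [Padic.valuation_mul hp0 (pow_ne_zero _ hy), Padic.valuation_p,
      pow_two, Padic.valuation_mul hy hy]; ring
  rw [h1, h2] at hinj
  omega

/-- Norm of the anisotropic binary form `a² - v b²`. -/
private lemma aux_binary_norm (hp2 : p ≠ 2) {v : ℚ_[p]} (hv : ‖v‖ = 1) (hvsq : ¬ IsSquare v)
    (a b : ℚ_[p]) : ‖a ^ 2 - v * b ^ 2‖ = max ‖a‖ ‖b‖ ^ 2 := by
  rcases eq_or_ne b 0 with rfl | hb
  · simp [max_eq_left (norm_nonneg a)]
  have hbpos : 0 < ‖b‖ := norm_pos_iff.mpr hb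
  have hvb : ‖v * b ^ 2‖ = ‖b‖ ^ 2 := by rw [norm_mul, hv, one_mul, norm_pow]
  rcases lt_trichotomy ‖a‖ ‖b‖ with hlt | heqn | hgt
  · have : ‖a ^ 2‖ ≠ ‖-(v * b ^ 2)‖ := by
      rw [norm_neg, hvb, norm_pow]
      exact ne_of_lt (by nlinarith [norm_nonneg a])
    rw [sub_eq_add_neg, Padic.add_eq_max_of_ne this, norm_neg, hvb, norm_pow,
      max_eq_right (by nlinarith [norm_nonneg a]), max_eq_right hlt.le]
  · have ha : a ≠ 0 := by
      intro h0; rw [h0, norm_zero] at heqn; exact hb (norm_eq_zero.mp heqn.symm)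
    have hu : ‖a / b‖ = 1 := by rw [norm_div, heqn, div_self (ne_of_gt hbpos)]
    have hle1 : ‖(a / b) ^ 2 - v‖ ≤ 1 := by
      calc ‖(a / b) ^ 2 - v‖ = ‖(a/b)^2 + (-v)‖ := by rw [sub_eq_add_neg]
      _ ≤ max ‖(a/b)^2‖ ‖-v‖ := Padic.nonarchimedean _ _
      _ ≤ 1 := by rw [norm_pow, hu, one_pow, norm_neg, hv]; simp
    have key : ‖(a / b) ^ 2 - v‖ = 1 := by
      rcases lt_or_eq_of_le hle1 with h | h
      · exact absurd (aux_isSquare_of_unit_close hp2 hu h) hvsq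
      · exact h
    have hid : a ^ 2 - v * b ^ 2 = b ^ 2 * ((a / b) ^ 2 - v) := by field_simp
    rw [hid, norm_mul, norm_pow, key, mul_one, heqn, max_self]
  · have : ‖a ^ 2‖ ≠ ‖-(v * b ^ 2)‖ := by
      rw [norm_neg, hvb, norm_pow]
      exact ne_of_gt (by nlinarith [norm_nonneg a])
    rw [sub_eq_add_neg, Padic.add_eq_max_of_ne this, norm_neg, hvb, norm_pow,
      max_eq_left (by nlinarith [norm_nonneg a]), max_eq_left hgt.le]

private lemma aux_col_norms (hp2 : p ≠ 2) {v : ℚ_[p]} (hv : ‖v‖ = 1) (hvsq : ¬ IsSquare v)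
    {a b c r : ℚ_[p]} (hr : ‖r‖ = 1) (heq : a ^ 2 - v * b ^ 2 + (p : ℚ_[p]) * c ^ 2 = r) :
    ‖a‖ ≤ 1 ∧ ‖b‖ ≤ 1 ∧ ‖(p : ℚ_[p]) * c ^ 2‖ < 1 ∧ max ‖a‖ ‖b‖ = 1 := by
  have hbin := aux_binary_norm hp2 hv hvsq a b
  have hmaxnn : (0:ℝ) ≤ max ‖a‖ ‖b‖ := le_trans (norm_nonneg a) (le_max_left _ _)
  have hparity1 : ∀ c' : ℚ_[p], c' ≠ 0 → ‖(p : ℚ_[p]) * c' ^ 2‖ ≠ 1 := by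
    intro c' hc' h1
    exact aux_norm_parity (one_ne_zero) hc' (by rw [one_pow, norm_one, h1])
  have key : ‖a ^ 2 - v * b ^ 2‖ = 1 ∧ ‖(p : ℚ_[p]) * c ^ 2‖ < 1 := by
    rcases eq_or_ne c 0 with rfl | hc
    · constructor
      · rw [show a ^ 2 - v * b ^ 2 = r by linear_combination heq, hr]
      · simp [norm_mul]
    · have hs_ne : a ^ 2 - v * b ^ 2 ≠ 0 := by
        intro h0
        have : (p : ℚ_[p]) * c ^ 2 = r := by linear_combination heq - h0
        exact hparity1 c hc (by rw [this, hr])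
      have hwit : ∃ x : ℚ_[p], x ≠ 0 ∧ ‖a ^ 2 - v * b ^ 2‖ = ‖x ^ 2‖ := by
        have hmaxpos : 0 < max ‖a‖ ‖b‖ := by
          rcases eq_or_lt_of_le hmaxnn with h0 | h
          · exact absurd (norm_eq_zero.mp (by rw [hbin, ← h0]; norm_num)) hs_ne
          · exact h
        rcases max_choice ‖a‖ ‖b‖ with hm | hm
        · exact ⟨a, by rw [hm] at hmaxpos; exact norm_pos_iff.mp hmaxpos,
            by rw [hbin, hm, norm_pow]⟩
        · exact ⟨b, by rw [hm] at hmaxpos; exact norm_pos_iff.mp hmaxpos,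
            by rw [hbin, hm, norm_pow]⟩
      obtain ⟨x, hx0, hxs⟩ := hwit
      have hne : ‖a ^ 2 - v * b ^ 2‖ ≠ ‖(p : ℚ_[p]) * c ^ 2‖ := by
        rw [hxs]; exact aux_norm_parity hx0 hc
      have hmax : max ‖a ^ 2 - v * b ^ 2‖ ‖(p : ℚ_[p]) * c ^ 2‖ = 1 := by
        rw [← Padic.add_eq_max_of_ne hne, heq, hr]
      have hs1 : ‖a ^ 2 - v * b ^ 2‖ = 1 ∧ ‖(p:ℚ_[p]) * c ^ 2‖ ≤ 1 := by
        rcases max_cases ‖a ^ 2 - v * b ^ 2‖ ‖(p : ℚ_[p]) * c ^ 2‖ with ⟨h1, h2⟩ | ⟨h1, h2⟩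
        · rw [h1] at hmax; exact ⟨hmax, by rw [← hmax]; exact h2⟩
        · rw [h1] at hmax; exact absurd hmax (hparity1 c hc)
      exact ⟨hs1.1, lt_of_le_of_ne hs1.2 (hparity1 c hc)⟩
  obtain ⟨hs1, hpc⟩ := key
  have hmax1 : max ‖a‖ ‖b‖ = 1 := by nlinarith [hbin, hs1]
  exact ⟨by nlinarith [le_max_left ‖a‖ ‖b‖], by nlinarith [le_max_right ‖a‖ ‖b‖], hpc, hmax1⟩

private lemma aux_neg_v_not_square (hp : p % 4 = 1) {v : ℚ_[p]} (hvsq : ¬ IsSquare v) :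
    ¬ IsSquare (-v) := by
  intro ⟨t, ht⟩
  obtain ⟨i, hi⟩ := aux_neg_one_isSquare (p := p) hp
  exact hvsq ⟨i * t, by linear_combination (-1) * ht + (t*t) * hi⟩

/-- Square root near a unit. -/
private lemma aux_sqrt (hp2 : p ≠ 2) {u w : ℚ_[p]} (hu : ‖u‖ = 1) (hclose : ‖w - u ^ 2‖ < 1) :
    ∃ β : ℚ_[p], β * β = w ∧ β ≠ 0 := by
  have hw0 : w ≠ 0 := by
    intro h0
    rw [h0, zero_sub, norm_neg, norm_pow, hu, one_pow] at hclose
    linarith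
  obtain ⟨s, hs⟩ := aux_isSquare_of_unit_close hp2 hu
    (by rw [show u ^ 2 - w = -(w - u ^ 2) by ring, norm_neg]; exact hclose)
  exact ⟨s, hs.symm, fun h0 => hw0 (by rw [hs, h0, mul_zero])⟩

variable {v : ℚ_[p]}

private lemma aux_diag_eq :
    (Matrix.diagonal ![1, -v, (p : ℚ_[p])] : Matrix (Fin 3) (Fin 3) ℚ_[p]) =
      !![1, 0, 0; 0, -v, 0; 0, 0, (p : ℚ_[p])] := by
  ext i j; fin_cases i <;> fin_cases j <;> rfl

/-- rotation fixing `e₃`. -/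
private lemma aux_Z_so3 {α β : ℚ_[p]} (h : α ^ 2 - v * β ^ 2 = 1) :
    (!![α, v*β, 0; β, α, 0; 0, 0, 1] : Matrix (Fin 3) (Fin 3) ℚ_[p])ᵀ *
        (Matrix.diagonal ![1, -v, (p : ℚ_[p])]) * !![α, v*β, 0; β, α, 0; 0, 0, 1] =
      Matrix.diagonal ![1, -v, (p : ℚ_[p])] ∧
    (!![α, v*β, 0; β, α, 0; 0, 0, 1] : Matrix (Fin 3) (Fin 3) ℚ_[p]).det = 1 := by
  have hT : (!![α, v*β, 0; β, α, 0; 0, 0, 1] : Matrix (Fin 3) (Fin 3) ℚ_[p])ᵀ =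
      !![α, β, 0; v*β, α, 0; 0, 0, 1] := by
    ext i j; fin_cases i <;> fin_cases j <;> rfl
  constructor
  · rw [hT, aux_diag_eq]
    ext i j
    fin_cases i <;> fin_cases j <;>
      simp [Matrix.mul_apply, Fin.sum_univ_three, Matrix.vecHead, Matrix.vecTail] <;>
      first
        | linear_combination h | linear_combination -h
        | linear_combination v*h | linear_combination -v*h
        | linear_combination (p:ℚ_[p])*h | linear_combination -(p:ℚ_[p])*h
        | ring
  · rw [Matrix.det_fin_three]
    simp
    linear_combination h

/-- rotation fixing `e₁`; here `w = p/v`. -/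
private lemma aux_X_so3 {w γ δ : ℚ_[p]} (hw : v * w = (p : ℚ_[p]))
    (h : γ ^ 2 - w * δ ^ 2 = 1) :
    (!![1, 0, 0; 0, γ, w*δ; 0, δ, γ] : Matrix (Fin 3) (Fin 3) ℚ_[p])ᵀ *
        (Matrix.diagonal ![1, -v, (p : ℚ_[p])]) * !![1, 0, 0; 0, γ, w*δ; 0, δ, γ] =
      Matrix.diagonal ![1, -v, (p : ℚ_[p])] ∧
    (!![1, 0, 0; 0, γ, w*δ; 0, δ, γ] : Matrix (Fin 3) (Fin 3) ℚ_[p]).det = 1 := by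
  have hT : (!![1, 0, 0; 0, γ, w*δ; 0, δ, γ] : Matrix (Fin 3) (Fin 3) ℚ_[p])ᵀ =
      !![1, 0, 0; 0, γ, δ; 0, w*δ, γ] := by
    ext i j; fin_cases i <;> fin_cases j <;> rfl
  constructor
  · rw [hT, aux_diag_eq]
    ext i j
    fin_cases i <;> fin_cases j <;>
      simp [Matrix.mul_apply, Fin.sum_univ_three, Matrix.vecHead, Matrix.vecTail] <;>
      first
        | linear_combination h | linear_combination -h
        | linear_combination v*h | linear_combination -v*h
        | linear_combination (p:ℚ_[p])*h | linear_combination -(p:ℚ_[p])*h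
        | linear_combination -v*h - δ^2*hw | linear_combination v*h + δ^2*hw
        | linear_combination -γ*δ*hw | linear_combination γ*δ*hw
        | linear_combination (p:ℚ_[p])*h + w*δ^2*hw | linear_combination -(p:ℚ_[p])*h - w*δ^2*hw
        | linear_combination (p:ℚ_[p])*h - w*δ^2*hw | linear_combination -(p:ℚ_[p])*h + w*δ^2*hw
        | ring
  · rw [Matrix.det_fin_three]
    simp
    linear_combination h

/-- rotation fixing `e₂`. -/
private lemma aux_W_so3 {γ δ : ℚ_[p]} (h : γ ^ 2 + (p:ℚ_[p]) * δ ^ 2 = 1) :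
    (!![γ, 0, -(p:ℚ_[p])*δ; 0, 1, 0; δ, 0, γ] : Matrix (Fin 3) (Fin 3) ℚ_[p])ᵀ *
        (Matrix.diagonal ![1, -v, (p : ℚ_[p])]) * !![γ, 0, -(p:ℚ_[p])*δ; 0, 1, 0; δ, 0, γ] =
      Matrix.diagonal ![1, -v, (p : ℚ_[p])] ∧
    (!![γ, 0, -(p:ℚ_[p])*δ; 0, 1, 0; δ, 0, γ] : Matrix (Fin 3) (Fin 3) ℚ_[p]).det = 1 := by
  have hT : (!![γ, 0, -(p:ℚ_[p])*δ; 0, 1, 0; δ, 0, γ] : Matrix (Fin 3) (Fin 3) ℚ_[p])ᵀ =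
      !![γ, 0, δ; 0, 1, 0; -(p:ℚ_[p])*δ, 0, γ] := by
    ext i j; fin_cases i <;> fin_cases j <;> rfl
  constructor
  · rw [hT, aux_diag_eq]
    ext i j
    fin_cases i <;> fin_cases j <;>
      simp [Matrix.mul_apply, Fin.sum_univ_three, Matrix.vecHead, Matrix.vecTail] <;>
      first
        | linear_combination h | linear_combination -h
        | linear_combination v*h | linear_combination -v*h
        | linear_combination (p:ℚ_[p])*h | linear_combination -(p:ℚ_[p])*h
        | ring
  · rw [Matrix.det_fin_three]
    simp
    linear_combination h

private lemma aux_Z_inv {α β : ℚ_[p]} (h : α ^ 2 - v * β ^ 2 = 1) :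
    (!![α, v*β, 0; β, α, 0; 0, 0, 1] : Matrix (Fin 3) (Fin 3) ℚ_[p]) *
      !![α, v*(-β), 0; -β, α, 0; 0, 0, 1] = 1 := by
  ext i j
  fin_cases i <;> fin_cases j <;>
    simp [Matrix.mul_apply, Fin.sum_univ_three, Matrix.one_apply, Matrix.vecHead,
      Matrix.vecTail] <;>
    first
      | linear_combination h | linear_combination -h
      | linear_combination v*h | linear_combination -v*h
      | ring

private lemma aux_X_inv {w γ δ : ℚ_[p]} (h : γ ^ 2 - w * δ ^ 2 = 1) :
    (!![1, 0, 0; 0, γ, w*δ; 0, δ, γ] : Matrix (Fin 3) (Fin 3) ℚ_[p]) *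
      !![1, 0, 0; 0, γ, w*(-δ); 0, -δ, γ] = 1 := by
  ext i j
  fin_cases i <;> fin_cases j <;>
    simp [Matrix.mul_apply, Fin.sum_univ_three, Matrix.one_apply, Matrix.vecHead,
      Matrix.vecTail] <;>
    first
      | linear_combination h | linear_combination -h
      | linear_combination w*h | linear_combination -w*h
      | ring

private lemma aux_W_inv {γ δ : ℚ_[p]} (h : γ ^ 2 + (p:ℚ_[p]) * δ ^ 2 = 1) :
    (!![γ, 0, -(p:ℚ_[p])*δ; 0, 1, 0; δ, 0, γ] : Matrix (Fin 3) (Fin 3) ℚ_[p]) *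
      !![γ, 0, -(p:ℚ_[p])*(-δ); 0, 1, 0; -δ, 0, γ] = 1 := by
  ext i j
  fin_cases i <;> fin_cases j <;>
    simp [Matrix.mul_apply, Fin.sum_univ_three, Matrix.one_apply, Matrix.vecHead,
      Matrix.vecTail] <;>
    first
      | linear_combination h | linear_combination -h
      | linear_combination (p:ℚ_[p])*h | linear_combination -(p:ℚ_[p])*h
      | ring

private lemma aux_mul_mem {A L₁ L₂ : Matrix (Fin 3) (Fin 3) ℚ_[p]}
    (h₁ : L₁ᵀ * A * L₁ = A ∧ L₁.det = 1) (h₂ : L₂ᵀ * A * L₂ = A ∧ L₂.det = 1) :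
    (L₁ * L₂)ᵀ * A * (L₁ * L₂) = A ∧ (L₁ * L₂).det = 1 := by
  constructor
  · rw [Matrix.transpose_mul]
    calc L₂ᵀ * L₁ᵀ * A * (L₁ * L₂) = L₂ᵀ * (L₁ᵀ * A * L₁) * L₂ := by
          simp only [mul_assoc]
    _ = A := by rw [h₁.1, h₂.1]
  · rw [Matrix.det_mul, h₁.2, h₂.2, mul_one]

end AuxCardano

/-- For `p ≡ 1 (mod 4)`, every `M ∈ SO(3)_p` admits Cardano
decompositions `M = X·Z·Y` and `M = Y'·Z'·X'`, where factors labelled X, Y, Z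
are elements of `SO(3)_p` fixing `e₁`, `e₂`, `e₃` respectively. -/
theorem cardano_decompositions_one_mod_four
    (p : ℕ) [Fact p.Prime] (hp : p % 4 = 1)
    (v : ℚ_[p]) (hv : ‖v‖ = 1) (hvsq : ¬ IsSquare v)
    (A : Matrix (Fin 3) (Fin 3) ℚ_[p])
    (hA : A = Matrix.diagonal ![1, -v, (p : ℚ_[p])])
    (SO3 : Set (Matrix (Fin 3) (Fin 3) ℚ_[p]))
    (hSO3 : SO3 = {L | Lᵀ * A * L = A ∧ L.det = 1})
    (e : Fin 3 → (Fin 3 → ℚ_[p])) (he : ∀ i, e i = Pi.single i 1)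
    (M : Matrix (Fin 3) (Fin 3) ℚ_[p]) (hM : M ∈ SO3) :
    (∃ X Z Y, X ∈ SO3 ∧ Z ∈ SO3 ∧ Y ∈ SO3 ∧
      X.mulVec (e 0) = e 0 ∧ Z.mulVec (e 2) = e 2 ∧ Y.mulVec (e 1) = e 1 ∧
      M = X * Z * Y) ∧
    (∃ Y Z X, Y ∈ SO3 ∧ Z ∈ SO3 ∧ X ∈ SO3 ∧
      Y.mulVec (e 1) = e 1 ∧ Z.mulVec (e 2) = e 2 ∧ X.mulVec (e 0) = e 0 ∧
      M = Y * Z * X) := by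
  have hp2 : p ≠ 2 := by omega
  have hppos : (0:ℕ) < p := (Fact.out : p.Prime).pos
  have hv0 : v ≠ 0 := by intro h; rw [h, norm_zero] at hv; norm_num at hv
  have hnegv : ¬ IsSquare (-v) := aux_neg_v_not_square hp hvsq
  subst hA
  subst hSO3
  obtain ⟨hM1, hMdet⟩ := hM
  have h11 : (Mᵀ * Matrix.diagonal ![1, -v, (p:ℚ_[p])] * M) 1 1 =
      (Matrix.diagonal ![1, -v, (p:ℚ_[p])] : Matrix (Fin 3) (Fin 3) ℚ_[p]) 1 1 := by rw [hM1]
  have h00 : (Mᵀ * Matrix.diagonal ![1, -v, (p:ℚ_[p])] * M) 0 0 =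
      (Matrix.diagonal ![1, -v, (p:ℚ_[p])] : Matrix (Fin 3) (Fin 3) ℚ_[p]) 0 0 := by rw [hM1]
  rw [aux_diag_eq] at h11 h00
  simp [Matrix.mul_apply, Fin.sum_univ_three, Matrix.vecHead, Matrix.vecTail] at h11 h00
  constructor
  · -- Decomposition M = X * Z * Y
    set a := M 0 1 with ha
    set b := M 1 1 with hb
    set c := M 2 1 with hc
    have heq1 : a ^ 2 - v * b ^ 2 + (p:ℚ_[p]) * c ^ 2 = -v := by linear_combination h11
    obtain ⟨hale, hble, hpc, hmax⟩ :=
      aux_col_norms hp2 hv hvsq (show ‖-v‖ = 1 by rw [norm_neg, hv]) heq1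
    have hb1 : ‖b‖ = 1 := by
      by_contra hb1
      have hblt : ‖b‖ < 1 := lt_of_le_of_ne hble hb1
      have ha1 : ‖a‖ = 1 := by
        rcases max_choice ‖a‖ ‖b‖ with hm | hm
        · rw [hm] at hmax; exact hmax
        · rw [hm] at hmax; linarith
      have hsum : a ^ 2 - (-v) = v * b ^ 2 + -((p:ℚ_[p]) * c ^ 2) := by linear_combination heq1
      have hlt : ‖a ^ 2 - (-v)‖ < 1 := by
        rw [hsum]
        have h1 : ‖v * b ^ 2‖ < 1 := by
          rw [norm_mul, hv, one_mul, norm_pow]; nlinarith [norm_nonneg b]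
        calc ‖v * b ^ 2 + -((p:ℚ_[p]) * c ^ 2)‖ ≤ max ‖v * b ^ 2‖ ‖-((p:ℚ_[p]) * c ^ 2)‖ :=
              Padic.nonarchimedean _ _
        _ < 1 := max_lt h1 (by rw [norm_neg]; exact hpc)
      exact hnegv (aux_isSquare_of_unit_close hp2 ha1 hlt)
    have hb0 : b ≠ 0 := by intro h; rw [h, norm_zero] at hb1; norm_num at hb1
    have hclose : ‖(b ^ 2 - ((p:ℚ_[p]) * c ^ 2) / v) - b ^ 2‖ < 1 := by
      rw [show (b ^ 2 - ((p:ℚ_[p]) * c ^ 2) / v) - b ^ 2 = -(((p:ℚ_[p]) * c ^ 2) / v) by ring,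
        norm_neg, norm_div, hv, div_one]
      exact hpc
    obtain ⟨β, hβ, hβ0⟩ := aux_sqrt hp2 hb1 hclose
    have hβ' : v * (β * β) = v * b ^ 2 - (p:ℚ_[p]) * c ^ 2 := by
      rw [hβ]; field_simp
    -- constraints
    have hZcon : β ^ 2 - v * (a / v) ^ 2 = 1 := by
      field_simp
      linear_combination hβ' - heq1
    have hw : v * ((p:ℚ_[p]) / v) = (p:ℚ_[p]) := by field_simp
    have hXcon : (b / β) ^ 2 - ((p:ℚ_[p]) / v) * (c / β) ^ 2 = 1 := by
      field_simp
      linear_combination (-1) * hβ'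
    have hZcon' : β ^ 2 - v * (-(a / v)) ^ 2 = 1 := by linear_combination hZcon
    have hXcon' : (b / β) ^ 2 - ((p:ℚ_[p]) / v) * (-(c / β)) ^ 2 = 1 := by
      linear_combination hXcon
    set Zm : Matrix (Fin 3) (Fin 3) ℚ_[p] := !![β, v*(a/v), 0; (a/v), β, 0; 0, 0, 1] with hZm
    set Xm : Matrix (Fin 3) (Fin 3) ℚ_[p] :=
      !![1, 0, 0; 0, (b/β), ((p:ℚ_[p])/v)*(c/β); 0, (c/β), (b/β)] with hXm
    set Zinv : Matrix (Fin 3) (Fin 3) ℚ_[p] :=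
      !![β, v*(-(a/v)), 0; -(a/v), β, 0; 0, 0, 1] with hZinv
    set Xinv : Matrix (Fin 3) (Fin 3) ℚ_[p] :=
      !![1, 0, 0; 0, (b/β), ((p:ℚ_[p])/v)*(-(c/β)); 0, -(c/β), (b/β)] with hXinv
    have memZ := aux_Z_so3 (p := p) hZcon
    have memX := aux_X_so3 (p := p) hw hXcon
    have memZinv := aux_Z_so3 (p := p) hZcon'
    have memXinv := aux_X_so3 (p := p) hw hXcon'
    have hZZinv : Zm * Zinv = 1 := aux_Z_inv hZcon
    have hXXinv : Xm * Xinv = 1 := aux_X_inv hXcon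
    have hZinvZ : Zinv * Zm = 1 := mul_eq_one_comm.mp hZZinv
    have hXinvX : Xinv * Xm = 1 := mul_eq_one_comm.mp hXXinv
    set Y : Matrix (Fin 3) (Fin 3) ℚ_[p] := Zinv * (Xinv * M) with hY
    have hcol : (Xm * Zm).mulVec (e 1) = M.mulVec (e 1) := by
      rw [he 1]
      funext i
      fin_cases i <;>
        simp [hXm, hZm, ← ha, ← hb, ← hc, Matrix.mulVec, dotProduct, Matrix.mul_apply,
          Fin.sum_univ_three, Pi.single_apply, Matrix.vecHead, Matrix.vecTail] <;>
        field_simp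
    have hdecomp : M = Xm * Zm * Y := by
      rw [hY]
      calc M = (Xm * Xinv) * M := by rw [hXXinv, one_mul]
      _ = Xm * (Xinv * M) := mul_assoc _ _ _
      _ = Xm * (1 * (Xinv * M)) := by rw [one_mul]
      _ = Xm * ((Zm * Zinv) * (Xinv * M)) := by rw [hZZinv]
      _ = Xm * (Zm * (Zinv * (Xinv * M))) := by rw [mul_assoc]
      _ = Xm * Zm * (Zinv * (Xinv * M)) := (mul_assoc _ _ _).symm
    refine ⟨Xm, Zm, Y, memX, memZ, aux_mul_mem memZinv (aux_mul_mem memXinv ⟨hM1, hMdet⟩),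
      ?_, ?_, ?_, hdecomp⟩
    · rw [he 0]
      funext i
      fin_cases i <;>
        simp [hXm, Matrix.mulVec, dotProduct, Fin.sum_univ_three, Pi.single_apply,
          Matrix.vecHead, Matrix.vecTail]
    · rw [he 2]
      funext i
      fin_cases i <;>
        simp [hZm, Matrix.mulVec, dotProduct, Fin.sum_univ_three, Pi.single_apply,
          Matrix.vecHead, Matrix.vecTail]
    · calc Y.mulVec (e 1) = Zinv.mulVec ((Xinv * M).mulVec (e 1)) :=
            (Matrix.mulVec_mulVec (e 1) Zinv (Xinv * M)).symm
      _ = Zinv.mulVec (Xinv.mulVec (M.mulVec (e 1))) := by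
            rw [Matrix.mulVec_mulVec (e 1) Xinv M]
      _ = Zinv.mulVec (Xinv.mulVec ((Xm * Zm).mulVec (e 1))) := by rw [hcol]
      _ = Zinv.mulVec ((Xinv * (Xm * Zm)).mulVec (e 1)) := by
            rw [Matrix.mulVec_mulVec (e 1) Xinv (Xm * Zm)]
      _ = Zinv.mulVec (Zm.mulVec (e 1)) := by rw [← mul_assoc, hXinvX, one_mul]
      _ = (Zinv * Zm).mulVec (e 1) := by rw [Matrix.mulVec_mulVec (e 1) Zinv Zm]
      _ = e 1 := by rw [hZinvZ, Matrix.one_mulVec]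
  · -- Decomposition M = Y * Z * X
    set a := M 0 0 with ha
    set b := M 1 0 with hb
    set c := M 2 0 with hc
    have heq2 : a ^ 2 - v * b ^ 2 + (p:ℚ_[p]) * c ^ 2 = 1 := by linear_combination h00
    obtain ⟨hale, hble, hpc, hmax⟩ := aux_col_norms hp2 hv hvsq norm_one heq2
    have ha1 : ‖a‖ = 1 := by
      by_contra ha1
      have halt : ‖a‖ < 1 := lt_of_le_of_ne hale ha1
      have hb1 : ‖b‖ = 1 := by
        rcases max_choice ‖a‖ ‖b‖ with hm | hm
        · rw [hm] at hmax; linarith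
        · rw [hm] at hmax; exact hmax
      have hb0 : b ≠ 0 := by intro h; rw [h, norm_zero] at hb1; norm_num at hb1
      have hx : ‖1 / b‖ = 1 := by rw [norm_div, norm_one, hb1, div_one]
      have hid : (1 / b) ^ 2 - (-v) = (a ^ 2 + (p:ℚ_[p]) * c ^ 2) / b ^ 2 := by
        field_simp
        linear_combination (-1) * heq2
      have hlt : ‖(1 / b) ^ 2 - (-v)‖ < 1 := by
        rw [hid, norm_div, norm_pow, hb1, one_pow, div_one]
        have h1 : ‖a ^ 2‖ < 1 := by rw [norm_pow]; nlinarith [norm_nonneg a]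
        calc ‖a ^ 2 + (p:ℚ_[p]) * c ^ 2‖ ≤ max ‖a ^ 2‖ ‖(p:ℚ_[p]) * c ^ 2‖ :=
              Padic.nonarchimedean _ _
        _ < 1 := max_lt h1 hpc
      exact hnegv (aux_isSquare_of_unit_close hp2 hx hlt)
    have ha0 : a ≠ 0 := by intro h; rw [h, norm_zero] at ha1; norm_num at ha1
    have hclose : ‖(a ^ 2 + (p:ℚ_[p]) * c ^ 2) - a ^ 2‖ < 1 := by
      rw [show (a ^ 2 + (p:ℚ_[p]) * c ^ 2) - a ^ 2 = (p:ℚ_[p]) * c ^ 2 by ring]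
      exact hpc
    obtain ⟨α, hα, hα0⟩ := aux_sqrt hp2 ha1 hclose
    have hWcon : (a / α) ^ 2 + (p:ℚ_[p]) * (c / α) ^ 2 = 1 := by
      field_simp
      linear_combination (-1) * hα
    have hZcon : α ^ 2 - v * b ^ 2 = 1 := by linear_combination hα + heq2
    have hWcon' : (a / α) ^ 2 + (p:ℚ_[p]) * (-(c / α)) ^ 2 = 1 := by linear_combination hWcon
    have hZcon' : α ^ 2 - v * (-b) ^ 2 = 1 := by linear_combination hZcon
    set Wm : Matrix (Fin 3) (Fin 3) ℚ_[p] :=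
      !![(a/α), 0, -(p:ℚ_[p])*(c/α); 0, 1, 0; (c/α), 0, (a/α)] with hWm
    set Zm : Matrix (Fin 3) (Fin 3) ℚ_[p] := !![α, v*b, 0; b, α, 0; 0, 0, 1] with hZm
    set Winv : Matrix (Fin 3) (Fin 3) ℚ_[p] :=
      !![(a/α), 0, -(p:ℚ_[p])*(-(c/α)); 0, 1, 0; -(c/α), 0, (a/α)] with hWinv
    set Zinv : Matrix (Fin 3) (Fin 3) ℚ_[p] := !![α, v*(-b), 0; -b, α, 0; 0, 0, 1] with hZinv
    have memW := aux_W_so3 (p := p) (v := v) hWcon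
    have memZ := aux_Z_so3 (p := p) hZcon
    have memWinv := aux_W_so3 (p := p) (v := v) hWcon'
    have memZinv := aux_Z_so3 (p := p) hZcon'
    have hWWinv : Wm * Winv = 1 := aux_W_inv hWcon
    have hZZinv : Zm * Zinv = 1 := aux_Z_inv hZcon
    have hWinvW : Winv * Wm = 1 := mul_eq_one_comm.mp hWWinv
    have hZinvZ : Zinv * Zm = 1 := mul_eq_one_comm.mp hZZinv
    set Xd : Matrix (Fin 3) (Fin 3) ℚ_[p] := Zinv * (Winv * M) with hXd
    have hcol : (Wm * Zm).mulVec (e 0) = M.mulVec (e 0) := by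
      rw [he 0]
      funext i
      fin_cases i <;>
        simp [hWm, hZm, ← ha, ← hb, ← hc, Matrix.mulVec, dotProduct, Matrix.mul_apply,
          Fin.sum_univ_three, Pi.single_apply, Matrix.vecHead, Matrix.vecTail] <;>
        field_simp
    have hdecomp : M = Wm * Zm * Xd := by
      rw [hXd]
      calc M = (Wm * Winv) * M := by rw [hWWinv, one_mul]
      _ = Wm * (Winv * M) := mul_assoc _ _ _
      _ = Wm * (1 * (Winv * M)) := by rw [one_mul]
      _ = Wm * ((Zm * Zinv) * (Winv * M)) := by rw [hZZinv]
      _ = Wm * (Zm * (Zinv * (Winv * M))) := by rw [mul_assoc]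
      _ = Wm * Zm * (Zinv * (Winv * M)) := (mul_assoc _ _ _).symm
    refine ⟨Wm, Zm, Xd, memW, memZ, aux_mul_mem memZinv (aux_mul_mem memWinv ⟨hM1, hMdet⟩),
      ?_, ?_, ?_, hdecomp⟩
    · rw [he 1]
      funext i
      fin_cases i <;>
        simp [hWm, Matrix.mulVec, dotProduct, Fin.sum_univ_three, Pi.single_apply,
          Matrix.vecHead, Matrix.vecTail]
    · rw [he 2]
      funext i
      fin_cases i <;>
        simp [hZm, Matrix.mulVec, dotProduct, Fin.sum_univ_three, Pi.single_apply,
          Matrix.vecHead, Matrix.vecTail]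
    · calc Xd.mulVec (e 0) = Zinv.mulVec ((Winv * M).mulVec (e 0)) :=
            (Matrix.mulVec_mulVec (e 0) Zinv (Winv * M)).symm
      _ = Zinv.mulVec (Winv.mulVec (M.mulVec (e 0))) := by
            rw [Matrix.mulVec_mulVec (e 0) Winv M]
      _ = Zinv.mulVec (Winv.mulVec ((Wm * Zm).mulVec (e 0))) := by rw [hcol]
      _ = Zinv.mulVec ((Winv * (Wm * Zm)).mulVec (e 0)) := by
            rw [Matrix.mulVec_mulVec (e 0) Winv (Wm * Zm)]
      _ = Zinv.mulVec (Zm.mulVec (e 0)) := by rw [← mul_assoc, hWinvW, one_mul]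
      _ = (Zinv * Zm).mulVec (e 0) := by rw [Matrix.mulVec_mulVec (e 0) Zinv Zm]
      _ = e 0 := by rw [hZinvZ, Matrix.one_mulVec]
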